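/- For every complex number α and every positive integer k with α + k ≠ 0, the terminating hypergeometric sum satisfies ∑_{n=0}^{k-1} [(α)_n (1-k)_n / ((-k)_n · n!)] · (k/(α+k))^n = [(α+1)_k / k!] · (k/(α+k))^k. -/

import Mathlib

open Finset

lemma poch_neg_ne_zero (k : ℕ) : ∀ n : ℕ, n ≤ k → (ascPochhammer ℂ n).eval (-(k : ℂ)) ≠ 0 := by
  intro n
  induction n with
  | zero => simp
  | succ m ih =>
    intro hn
    rw [ascPochhammer_succ_eval]
    refine mul_ne_zero (ih (le_of_lt hn)) ?_
    have hm : (m : ℂ) ≠ (k : ℂ) := by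
      exact_mod_cast Nat.ne_of_lt hn
    intro hc
    exact hm (by linear_combination hc)

lemma poch_ratio (k : ℕ) : ∀ n : ℕ,
    (k : ℂ) * (ascPochhammer ℂ n).eval (1 - (k : ℂ))
      = (ascPochhammer ℂ n).eval (-(k : ℂ)) * ((k : ℂ) - n) := by
  intro n
  induction n with
  | zero => simp
  | succ m ih =>
    rw [ascPochhammer_succ_eval, ascPochhammer_succ_eval]
    push_cast
    linear_combination (1 - (k : ℂ) + m) * ih

/-- Gosper-type evaluation of the terminating hypergeometric series
`₂F₁(α, 1-k; -k; k/(α+k))`: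
`∑_{n=0}^{k-1} (α)_n (1-k)_n / ((-k)_n n!) (k/(α+k))^n = (α+1)_k / k! * (k/(α+k))^k`. -/
theorem gosper_terminating_eval (α : ℂ) (k : ℕ) (hk : 1 ≤ k) (h : α + k ≠ 0) :
    ∑ n ∈ Finset.range k,
      ((ascPochhammer ℂ n).eval α * (ascPochhammer ℂ n).eval (1 - (k : ℂ)) /
        ((ascPochhammer ℂ n).eval (-(k : ℂ)) * (n.factorial : ℂ))) * ((k : ℂ) / (α + k)) ^ n
    = ((ascPochhammer ℂ k).eval (α + 1) / (k.factorial : ℂ)) * ((k : ℂ) / (α + k)) ^ k := by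
  have hk0 : (k : ℂ) ≠ 0 := Nat.cast_ne_zero.mpr (by omega)
  have key : ∀ m : ℕ, m < k →
      ∑ n ∈ Finset.range (m + 1),
        ((ascPochhammer ℂ n).eval α * (ascPochhammer ℂ n).eval (1 - (k : ℂ)) /
          ((ascPochhammer ℂ n).eval (-(k : ℂ)) * (n.factorial : ℂ))) * ((k : ℂ) / (α + k)) ^ n
      = (α + k) / k * ((ascPochhammer ℂ m).eval (α + 1) / (m.factorial : ℂ))
          * ((k : ℂ) / (α + k)) ^ (m + 1) := by
    intro m
    induction m with
    | zero =>
      intro _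
      rw [Finset.sum_range_one]
      simp only [ascPochhammer_zero, Polynomial.eval_one, Nat.factorial_zero, Nat.cast_one,
        pow_zero, pow_one]
      field_simp
      rw [zero_add, pow_one]
      field_simp
    | succ m ih =>
      intro hm
      have hmk : m < k := Nat.lt_of_succ_lt hm
      rw [Finset.sum_range_succ, ih hmk]
      have hpne : (ascPochhammer ℂ (m + 1)).eval (-(k : ℂ)) ≠ 0 :=
        poch_neg_ne_zero k (m + 1) (le_of_lt hm)
      have hratio := poch_ratio k (m + 1)
      have hfacm : (m.factorial : ℂ) ≠ 0 := by
        exact_mod_cast (Nat.factorial_pos m).ne'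
      have hpa : (ascPochhammer ℂ (m + 1)).eval α = (ascPochhammer ℂ m).eval (α + 1) * α := by
        rw [ascPochhammer_succ_left]
        simp [Polynomial.eval_mul, Polynomial.eval_comp, mul_comm]
      have hpb : (ascPochhammer ℂ (m + 1)).eval (α + 1)
          = (ascPochhammer ℂ m).eval (α + 1) * (α + 1 + m) := by
        rw [ascPochhammer_succ_eval]
      have hfs : (((m + 1).factorial : ℕ) : ℂ) = (m.factorial : ℂ) * ((m : ℂ) + 1) := by
        push_cast [Nat.factorial_succ]
        ring
      have hm1 : (m : ℂ) + 1 ≠ 0 := Nat.cast_add_one_ne_zero m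
      have hfne : ((m + 1).factorial : ℂ) ≠ 0 := by
        rw [hfs]; exact mul_ne_zero hfacm hm1
      have hterm : (ascPochhammer ℂ (m + 1)).eval α * (ascPochhammer ℂ (m + 1)).eval (1 - (k : ℂ)) /
            ((ascPochhammer ℂ (m + 1)).eval (-(k : ℂ)) * ((m + 1).factorial : ℂ))
          = (ascPochhammer ℂ m).eval (α + 1) * α * ((k : ℂ) - ((m : ℂ) + 1)) /
            ((k : ℂ) * ((m + 1).factorial : ℂ)) := by
        rw [div_eq_div_iff (mul_ne_zero hpne hfne) (mul_ne_zero hk0 hfne), hpa]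
        push_cast at hratio
        linear_combination (ascPochhammer ℂ m).eval (α + 1) * α * ((m + 1).factorial : ℂ) * hratio
      rw [hterm, hpb, hfs, pow_succ ((k : ℂ) / (α + k)) (m + 1)]
      have hco : (α + (k : ℂ)) / k * ((ascPochhammer ℂ m).eval (α + 1) / (m.factorial : ℂ))
            + (ascPochhammer ℂ m).eval (α + 1) * α * ((k : ℂ) - ((m : ℂ) + 1)) /
              ((k : ℂ) * ((m.factorial : ℂ) * ((m : ℂ) + 1)))
          = (α + (k : ℂ)) / k *
              ((ascPochhammer ℂ m).eval (α + 1) * (α + 1 + (m : ℂ)) /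
                ((m.factorial : ℂ) * ((m : ℂ) + 1))) * ((k : ℂ) / (α + k)) := by
        field_simp
        ring
      linear_combination ((k : ℂ) / (α + k)) ^ (m + 1) * hco
  obtain ⟨j, rfl⟩ : ∃ j, k = j + 1 := ⟨k - 1, (Nat.succ_pred_eq_of_pos hk).symm⟩
  rw [key j (Nat.lt_succ_self j)]
  have hpb : (ascPochhammer ℂ (j + 1)).eval (α + 1)
      = (ascPochhammer ℂ j).eval (α + 1) * (α + 1 + j) := by
    rw [ascPochhammer_succ_eval]
  have hfs : (((j + 1).factorial : ℕ) : ℂ) = (j.factorial : ℂ) * ((j : ℂ) + 1) := by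
    push_cast [Nat.factorial_succ]
    ring
  have hfacj : (j.factorial : ℂ) ≠ 0 := by
    exact_mod_cast (Nat.factorial_pos j).ne'
  have hj1 : (j : ℂ) + 1 ≠ 0 := Nat.cast_add_one_ne_zero j
  rw [hpb, hfs]
  have hco : (α + ((j : ℂ) + 1)) / ((j : ℂ) + 1) * ((ascPochhammer ℂ j).eval (α + 1) / (j.factorial : ℂ))
      = (ascPochhammer ℂ j).eval (α + 1) * (α + 1 + (j : ℂ)) / ((j.factorial : ℂ) * ((j : ℂ) + 1)) := by
    field_simp
    ring
  push_cast at h ⊢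
  linear_combination ((((j : ℂ) + 1)) / (α + ((j : ℂ) + 1))) ^ (j + 1) * hco
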